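/- For all n ≥ 2, every 1-cocycle δ : SL(n,ℤ) → ℤⁿ (satisfying δ(gh) = δ(g) + g·δ(h)) is a coboundary: there exists y ∈ ℤⁿ with δ(g) = (1 − g)·y for all g ∈ SL(n,ℤ). In cohomological terms, H¹(SL(n,ℤ), ℤⁿ) = 0. -/

import Mathlib

open Matrix

namespace SlnCob

variable {n : ℕ}

abbrev SL (n : ℕ) := Matrix.SpecialLinearGroup (Fin n) ℤ

def tsl {n : ℕ} {i j : Fin n} (h : i ≠ j) (c : ℤ) : SL n :=
  ⟨Matrix.transvection i j c, Matrix.det_transvection_of_ne i j h c⟩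

def TS (n : ℕ) : Set (SL n) := {g | ∃ (i j : Fin n) (h : i ≠ j) (c : ℤ), g = tsl h c}

lemma tsl_mem {i j : Fin n} (h : i ≠ j) (c : ℤ) : tsl h c ∈ TS n := ⟨i, j, h, c, rfl⟩

lemma tsl_mul_apply {p q : Fin n} (hpq : p ≠ q) (c : ℤ) (g : SL n) (i j : Fin n) :
    ((tsl hpq c * g : SL n) : Matrix (Fin n) (Fin n) ℤ) i j
      = (g : Matrix (Fin n) (Fin n) ℤ) i j
        + (if i = p then c * (g : Matrix (Fin n) (Fin n) ℤ) q j else 0) := by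
  rw [Matrix.SpecialLinearGroup.coe_mul]
  by_cases hip : i = p
  · subst hip; simp [tsl]
  · rw [if_neg hip, add_zero]
    exact Matrix.transvection_mul_apply_of_ne _ _ _ _ hip _ _

/-- columns with index `< k` are standard basis vectors -/
def ColStd (g : SL n) (k : ℕ) : Prop :=
  ∀ i j : Fin n, (j : ℕ) < k → (g : Matrix (Fin n) (Fin n) ℤ) i j = if i = j then 1 else 0

lemma colStd_mul {p q : Fin n} (hpq : p ≠ q) (c : ℤ) {g : SL n} {k : ℕ}
    (hg : ColStd g k) (hq : k ≤ (q : ℕ)) : ColStd (tsl hpq c * g) k := by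
  intro i j hj
  rw [tsl_mul_apply]
  have hqj : q ≠ j := by
    intro h; rw [h] at hq; omega
  rw [hg i j hj, hg q j hj, if_neg hqj]
  simp

lemma mem_of_tsl_mul {i j : Fin n} (h : i ≠ j) (c : ℤ) {g : SL n}
    (hm : tsl h c * g ∈ Subgroup.closure (TS n)) : g ∈ Subgroup.closure (TS n) := by
  have ht : tsl h c ∈ Subgroup.closure (TS n) := Subgroup.subset_closure (tsl_mem h c)
  have := Subgroup.mul_mem _ (Subgroup.inv_mem _ ht) hm
  simpa using this

def mu (g : SL n) (kf : Fin n) : ℕ :=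
  ∑ i ∈ Finset.univ.erase kf, ((g : Matrix (Fin n) (Fin n) ℤ) i kf).natAbs

lemma mu_lt {g g' : SL n} {kf i₀ : Fin n} (hi₀ : i₀ ≠ kf)
    (hagree : ∀ i, i ≠ kf → i ≠ i₀ →
      (g' : Matrix (Fin n) (Fin n) ℤ) i kf = (g : Matrix (Fin n) (Fin n) ℤ) i kf)
    (hlt : ((g' : Matrix (Fin n) (Fin n) ℤ) i₀ kf).natAbs
      < ((g : Matrix (Fin n) (Fin n) ℤ) i₀ kf).natAbs) : mu g' kf < mu g kf := by
  have h₀ : i₀ ∈ Finset.univ.erase kf := Finset.mem_erase.2 ⟨hi₀, Finset.mem_univ _⟩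
  rw [mu, mu, ← Finset.add_sum_erase _ _ h₀, ← Finset.add_sum_erase _ _ h₀]
  have : ∀ i ∈ (Finset.univ.erase kf).erase i₀,
      ((g' : Matrix (Fin n) (Fin n) ℤ) i kf).natAbs
        = ((g : Matrix (Fin n) (Fin n) ℤ) i kf).natAbs := by
    intro i hi
    rcases Finset.mem_erase.1 hi with ⟨h1, h2⟩
    rw [hagree i (Finset.mem_erase.1 h2).1 h1]
  rw [Finset.sum_congr rfl this]
  omega

lemma natAbs_emod_lt (a b : ℤ) (hb : b ≠ 0) : (a % b).natAbs < b.natAbs := by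
  have h1 : 0 ≤ a % b := Int.emod_nonneg a hb
  have h2 : a % b < |b| := by
    rw [← Int.emod_abs]; exact Int.emod_lt_of_pos a (abs_pos.mpr hb)
  rw [Int.abs_eq_natAbs] at h2
  omega

/-- clearing phase: column k already zero below (except the 1 at the diagonal);
clear the entries above. -/
lemma clearcol (k : ℕ) (hk : k < n)
    (ihnext : ∀ g : SL n, ColStd g (k + 1) → g ∈ Subgroup.closure (TS n)) :
    ∀ N : ℕ, ∀ g : SL n, ColStd g k →
      (∀ i : Fin n, i ≠ ⟨k, hk⟩ → k ≤ (i : ℕ) →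
        (g : Matrix (Fin n) (Fin n) ℤ) i ⟨k, hk⟩ = 0) →
      (g : Matrix (Fin n) (Fin n) ℤ) ⟨k, hk⟩ ⟨k, hk⟩ = 1 →
      mu g ⟨k, hk⟩ ≤ N → g ∈ Subgroup.closure (TS n) := by
  set kf : Fin n := ⟨k, hk⟩ with hkf
  intro N
  induction N with
  | zero =>
    intro g hcs hzero hone hmu
    apply ihnext
    intro i j hj
    rcases Nat.lt_or_ge (j : ℕ) k with h | h
    · exact hcs i j h
    · have hjk : j = kf := by
        apply Fin.ext; simp only [hkf]; omega
      subst hjk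
      by_cases hik : i = kf
      · subst hik; simpa using hone
      · rw [if_neg hik]
        have : ((g : Matrix (Fin n) (Fin n) ℤ) i kf).natAbs = 0 := by
          have hi : i ∈ Finset.univ.erase kf := Finset.mem_erase.2 ⟨hik, Finset.mem_univ _⟩
          have hmu0 : mu g kf = 0 := Nat.le_zero.mp hmu
          exact (Finset.sum_eq_zero_iff).mp hmu0 i hi
        omega
  | succ N ih =>
    intro g hcs hzero hone hmu
    by_cases hex : ∃ i : Fin n, i ≠ kf ∧ (g : Matrix (Fin n) (Fin n) ℤ) i kf ≠ 0
    · obtain ⟨i₀, hi₀kf, hi₀ne⟩ := hex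
      have hi₀k : (i₀ : ℕ) < k := by
        rcases Nat.lt_or_ge (i₀ : ℕ) k with h | h
        · exact h
        · exact absurd (hzero i₀ hi₀kf h) hi₀ne
      set c₀ : ℤ := (g : Matrix (Fin n) (Fin n) ℤ) i₀ kf with hc₀
      set g' : SL n := tsl hi₀kf (-c₀) * g with hg'
      have hent : ∀ i j : Fin n, (g' : Matrix (Fin n) (Fin n) ℤ) i j
          = (g : Matrix (Fin n) (Fin n) ℤ) i j
            + (if i = i₀ then (-c₀) * (g : Matrix (Fin n) (Fin n) ℤ) kf j else 0) :=
        fun i j => tsl_mul_apply _ _ _ _ _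
      apply mem_of_tsl_mul hi₀kf (-c₀)
      rw [← hg']
      apply ih g'
      · exact colStd_mul _ _ hcs (le_refl _)
      · intro i hikf hki
        rw [hent, hzero i hikf hki, if_neg, zero_add]
        intro hii₀; rw [hii₀] at hki; omega
      · rw [hent, if_neg, add_zero]; exact hone
        intro hkfi₀; rw [hkfi₀] at hi₀kf; exact hi₀kf rfl
      · have hlt : mu g' kf < mu g kf := by
          apply mu_lt hi₀kf
          · intro i hikf hii₀
            rw [hent, if_neg hii₀, add_zero]
          · rw [hent, if_pos rfl, hone]
            simp only [mul_one, ← hc₀]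
            simp
            omega
        omega
    · push_neg at hex
      apply ihnext
      intro i j hj
      rcases Nat.lt_or_ge (j : ℕ) k with h | h
      · exact hcs i j h
      · have hjk : j = kf := by apply Fin.ext; simp only [hkf]; omega
        subst hjk
        by_cases hik : i = kf
        · subst hik; simpa using hone
        · rw [if_neg hik]; exact hex i hik


lemma inv_row {g : SL n} {k : ℕ} (hg : ColStd g k) (kf : Fin n) (hkfk : k ≤ (kf : ℕ)) :
    (∀ m : Fin n, (m : ℕ) < k →
      ((g⁻¹ : SL n) : Matrix (Fin n) (Fin n) ℤ) kf m = 0) ∧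
    (∑ t, ((g⁻¹ : SL n) : Matrix (Fin n) (Fin n) ℤ) kf t
        * (g : Matrix (Fin n) (Fin n) ℤ) t kf) = 1 := by
  have hmul : ∀ a b : Fin n, ((g⁻¹ * g : SL n) : Matrix (Fin n) (Fin n) ℤ) a b
      = ∑ t, ((g⁻¹ : SL n) : Matrix (Fin n) (Fin n) ℤ) a t
          * (g : Matrix (Fin n) (Fin n) ℤ) t b := by
    intro a b
    rw [Matrix.SpecialLinearGroup.coe_mul, Matrix.mul_apply]
  constructor
  · intro m hm
    have hkfm : kf ≠ m := by
      intro h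
      rw [h] at hkfk
      omega
    have h0 : ((g⁻¹ * g : SL n) : Matrix (Fin n) (Fin n) ℤ) kf m = 0 := by
      rw [inv_mul_cancel, Matrix.SpecialLinearGroup.coe_one]
      exact Matrix.one_apply_ne hkfm
    rw [hmul] at h0
    have hrw : ∀ t : Fin n, ((g⁻¹ : SL n) : Matrix (Fin n) (Fin n) ℤ) kf t
        * (g : Matrix (Fin n) (Fin n) ℤ) t m
        = if t = m then ((g⁻¹ : SL n) : Matrix (Fin n) (Fin n) ℤ) kf m else 0 := by
      intro t
      rw [hg t m hm]
      by_cases htm : t = m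
      · subst htm; simp
      · simp [htm]
    rw [Finset.sum_congr rfl (fun t _ => hrw t)] at h0
    simpa using h0
  · have h1 : ((g⁻¹ * g : SL n) : Matrix (Fin n) (Fin n) ℤ) kf kf = 1 := by
      rw [inv_mul_cancel, Matrix.SpecialLinearGroup.coe_one]
      exact Matrix.one_apply_eq kf
    rw [hmul] at h1
    exact h1

lemma last_diag_one {g : SL n} {k : ℕ} (hk : k < n) (hn : n = k + 1)
    (hg : ColStd g k) : (g : Matrix (Fin n) (Fin n) ℤ) ⟨k, hk⟩ ⟨k, hk⟩ = 1 := by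
  set kf : Fin n := ⟨k, hk⟩ with hkf
  have hmat : (g : Matrix (Fin n) (Fin n) ℤ)
      = 1 + Matrix.replicateCol Unit (fun i => (g : Matrix (Fin n) (Fin n) ℤ) i kf
            - (if i = kf then 1 else 0))
          * Matrix.replicateRow Unit (fun j => if j = kf then (1:ℤ) else 0) := by
    ext i j
    rw [Matrix.add_apply, Matrix.mul_apply,
      Finset.sum_eq_single () (fun b _ hb => absurd rfl hb)
        (fun h => absurd (Finset.mem_univ ()) h),
      Matrix.replicateCol_apply, Matrix.replicateRow_apply]
    by_cases hj : j = kf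
    · subst hj
      by_cases hik : i = kf
      · subst hik; rw [Matrix.one_apply_eq]; simp
      · rw [Matrix.one_apply_ne hik, if_neg hik]; simp
    · have hjk : (j : ℕ) < k := by
        have h1 := j.isLt
        have h2 : (j : ℕ) ≠ k := by
          intro h
          exact hj (Fin.ext (by rw [h]))
        omega
      rw [hg i j hjk, if_neg hj, mul_zero, add_zero, Matrix.one_apply]
  have hdet := g.2
  rw [hmat, Matrix.det_one_add_replicateCol_mul_replicateRow] at hdet
  have hdot : (fun j => if j = kf then (1:ℤ) else 0) ⬝ᵥ
      (fun i => (g : Matrix (Fin n) (Fin n) ℤ) i kf - (if i = kf then 1 else 0))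
      = (g : Matrix (Fin n) (Fin n) ℤ) kf kf - 1 := by
    rw [dotProduct,
      Finset.sum_eq_single kf (fun b _ hb => by rw [if_neg hb, zero_mul])
        (fun h => absurd (Finset.mem_univ kf) h)]
    simp
  rw [hdot] at hdet
  omega

lemma euclid (k : ℕ) (hk : k < n)
    (ihnext : ∀ g : SL n, ColStd g (k + 1) → g ∈ Subgroup.closure (TS n)) :
    ∀ N : ℕ, ∀ g : SL n, ColStd g k → mu g ⟨k, hk⟩ ≤ N →
      g ∈ Subgroup.closure (TS n) := by
  set kf : Fin n := ⟨k, hk⟩ with hkf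
  intro N
  induction N using Nat.strong_induction_on with
  | _ N ih =>
  intro g hcs hmu
  by_cases hex : ∃ i : Fin n, i ≠ kf ∧ k ≤ (i : ℕ) ∧
      (g : Matrix (Fin n) (Fin n) ℤ) i kf ≠ 0
  · obtain ⟨i₀, hi₀kf, hki₀, hb0⟩ := hex
    have hkfi₀ : kf ≠ i₀ := Ne.symm hi₀kf
    set a : ℤ := (g : Matrix (Fin n) (Fin n) ℤ) kf kf with ha
    set b : ℤ := (g : Matrix (Fin n) (Fin n) ℤ) i₀ kf with hb
    set r : ℤ := a % b with hr
    set g₁ : SL n := tsl hkfi₀ (-(a / b)) * g with hg₁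
    have e₁ : ∀ i j : Fin n, (g₁ : Matrix (Fin n) (Fin n) ℤ) i j
        = (g : Matrix (Fin n) (Fin n) ℤ) i j
          + (if i = kf then (-(a / b)) * (g : Matrix (Fin n) (Fin n) ℤ) i₀ j else 0) :=
      fun i j => tsl_mul_apply _ _ _ _ _
    have hg₁kf : (g₁ : Matrix (Fin n) (Fin n) ℤ) kf kf = r := by
      rw [e₁, if_pos rfl, ← ha, ← hb, hr, Int.emod_def]; ring
    have hg₁i : ∀ i : Fin n, i ≠ kf →
        (g₁ : Matrix (Fin n) (Fin n) ℤ) i kf = (g : Matrix (Fin n) (Fin n) ℤ) i kf := by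
      intro i hikf; rw [e₁, if_neg hikf, add_zero]
    have hcs₁ : ColStd g₁ k := colStd_mul _ _ hcs hki₀
    by_cases hrz : r = 0
    · set g₂ : SL n := tsl hkfi₀ 1 * g₁ with hg₂
      have e₂ : ∀ i j : Fin n, (g₂ : Matrix (Fin n) (Fin n) ℤ) i j
          = (g₁ : Matrix (Fin n) (Fin n) ℤ) i j
            + (if i = kf then 1 * (g₁ : Matrix (Fin n) (Fin n) ℤ) i₀ j else 0) :=
        fun i j => tsl_mul_apply _ _ _ _ _
      have hg₂kf : (g₂ : Matrix (Fin n) (Fin n) ℤ) kf kf = b := by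
        rw [e₂, if_pos rfl, hg₁kf, hrz, hg₁i i₀ hi₀kf, ← hb]; ring
      have hg₂i : ∀ i : Fin n, i ≠ kf →
          (g₂ : Matrix (Fin n) (Fin n) ℤ) i kf = (g : Matrix (Fin n) (Fin n) ℤ) i kf := by
        intro i hikf; rw [e₂, if_neg hikf, add_zero, hg₁i i hikf]
      set g₃ : SL n := tsl hi₀kf (-1) * g₂ with hg₃
      have e₃ : ∀ i j : Fin n, (g₃ : Matrix (Fin n) (Fin n) ℤ) i j
          = (g₂ : Matrix (Fin n) (Fin n) ℤ) i j
            + (if i = i₀ then (-1) * (g₂ : Matrix (Fin n) (Fin n) ℤ) kf j else 0) :=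
        fun i j => tsl_mul_apply _ _ _ _ _
      have hg₃i₀ : (g₃ : Matrix (Fin n) (Fin n) ℤ) i₀ kf = 0 := by
        rw [e₃, if_pos rfl, hg₂kf, hg₂i i₀ hi₀kf, ← hb]; ring
      have hg₃i : ∀ i : Fin n, i ≠ kf → i ≠ i₀ →
          (g₃ : Matrix (Fin n) (Fin n) ℤ) i kf = (g : Matrix (Fin n) (Fin n) ℤ) i kf := by
        intro i hikf hii₀; rw [e₃, if_neg hii₀, add_zero, hg₂i i hikf]
      have hcs₃ : ColStd g₃ k := colStd_mul _ _ (colStd_mul _ _ hcs₁ hki₀) le_rfl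
      have hlt : mu g₃ kf < mu g kf := by
        apply mu_lt hi₀kf hg₃i
        rw [hg₃i₀, ← hb]
        simpa using hb0
      apply mem_of_tsl_mul hkfi₀ (-(a / b))
      apply mem_of_tsl_mul hkfi₀ 1
      apply mem_of_tsl_mul hi₀kf (-1)
      rw [← hg₁, ← hg₂, ← hg₃]
      exact ih (mu g₃ kf) (by omega) g₃ hcs₃ le_rfl
    · set g₂ : SL n := tsl hi₀kf (-(b / r)) * g₁ with hg₂
      have e₂ : ∀ i j : Fin n, (g₂ : Matrix (Fin n) (Fin n) ℤ) i j
          = (g₁ : Matrix (Fin n) (Fin n) ℤ) i j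
            + (if i = i₀ then (-(b / r)) * (g₁ : Matrix (Fin n) (Fin n) ℤ) kf j else 0) :=
        fun i j => tsl_mul_apply _ _ _ _ _
      have hg₂i₀ : (g₂ : Matrix (Fin n) (Fin n) ℤ) i₀ kf = b % r := by
        rw [e₂, if_pos rfl, hg₁kf, hg₁i i₀ hi₀kf, ← hb, Int.emod_def]; ring
      have hg₂i : ∀ i : Fin n, i ≠ kf → i ≠ i₀ →
          (g₂ : Matrix (Fin n) (Fin n) ℤ) i kf = (g : Matrix (Fin n) (Fin n) ℤ) i kf := by
        intro i hikf hii₀; rw [e₂, if_neg hii₀, add_zero, hg₁i i hikf]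
      have hcs₂ : ColStd g₂ k := colStd_mul _ _ hcs₁ le_rfl
      have hlt : mu g₂ kf < mu g kf := by
        apply mu_lt hi₀kf hg₂i
        rw [hg₂i₀, ← hb]
        have h1 : (b % r).natAbs < r.natAbs := natAbs_emod_lt b r hrz
        have h2 : r.natAbs < b.natAbs := by rw [hr]; exact natAbs_emod_lt a b hb0
        omega
      apply mem_of_tsl_mul hkfi₀ (-(a / b))
      apply mem_of_tsl_mul hi₀kf (-(b / r))
      rw [← hg₁, ← hg₂]
      exact ih (mu g₂ kf) (by omega) g₂ hcs₂ le_rfl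
  · push_neg at hex
    have hdiag : (g : Matrix (Fin n) (Fin n) ℤ) kf kf = 1 ∨
        (g : Matrix (Fin n) (Fin n) ℤ) kf kf = -1 := by
      obtain ⟨hzero, hsum⟩ := inv_row hcs kf (by rw [hkf])
      have hsc : (∑ t, ((g⁻¹ : SL n) : Matrix (Fin n) (Fin n) ℤ) kf t
            * (g : Matrix (Fin n) (Fin n) ℤ) t kf)
          = ((g⁻¹ : SL n) : Matrix (Fin n) (Fin n) ℤ) kf kf
            * (g : Matrix (Fin n) (Fin n) ℤ) kf kf := by
        apply Finset.sum_eq_single kf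
        · intro t _ htkf
          rcases Nat.lt_or_ge (t : ℕ) k with h | h
          · rw [hzero t h, zero_mul]
          · rw [hex t htkf h, mul_zero]
        · intro h; exact absurd (Finset.mem_univ kf) h
      rw [hsc] at hsum
      have hsingle := hsum
      have := Int.isUnit_iff.mp (IsUnit.of_mul_eq_one _
        (by rw [mul_comm] at hsingle; exact hsingle))
      exact this
    rcases hdiag with hone | hmone
    · exact clearcol k hk ihnext (mu g kf) g hcs
        (fun i hikf hki => hex i hikf hki) hone le_rfl
    · by_cases h2 : k + 1 < n
      · set m₀ : Fin n := ⟨k + 1, h2⟩ with hm₀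
        have hm₀kf : m₀ ≠ kf := by
          intro h
          have : (k+1 : ℕ) = k := congrArg Fin.val h
          omega
        have hkfm₀ : kf ≠ m₀ := Ne.symm hm₀kf
        have hcm₀ : (g : Matrix (Fin n) (Fin n) ℤ) m₀ kf = 0 :=
          hex m₀ hm₀kf (by simp [hm₀])
        set g₁ : SL n := tsl hm₀kf 1 * g with hg₁
        have e₁ : ∀ i j : Fin n, (g₁ : Matrix (Fin n) (Fin n) ℤ) i j
            = (g : Matrix (Fin n) (Fin n) ℤ) i j
              + (if i = m₀ then 1 * (g : Matrix (Fin n) (Fin n) ℤ) kf j else 0) :=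
          fun i j => tsl_mul_apply _ _ _ _ _
        set g₂ : SL n := tsl hkfm₀ (-2) * g₁ with hg₂
        have e₂ : ∀ i j : Fin n, (g₂ : Matrix (Fin n) (Fin n) ℤ) i j
            = (g₁ : Matrix (Fin n) (Fin n) ℤ) i j
              + (if i = kf then (-2) * (g₁ : Matrix (Fin n) (Fin n) ℤ) m₀ j else 0) :=
          fun i j => tsl_mul_apply _ _ _ _ _
        set g₃ : SL n := tsl hm₀kf 1 * g₂ with hg₃
        have e₃ : ∀ i j : Fin n, (g₃ : Matrix (Fin n) (Fin n) ℤ) i j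
            = (g₂ : Matrix (Fin n) (Fin n) ℤ) i j
              + (if i = m₀ then 1 * (g₂ : Matrix (Fin n) (Fin n) ℤ) kf j else 0) :=
          fun i j => tsl_mul_apply _ _ _ _ _
        have hg₁m₀ : (g₁ : Matrix (Fin n) (Fin n) ℤ) m₀ kf = -1 := by
          rw [e₁, if_pos rfl, hcm₀, hmone]; ring
        have hg₁kf : (g₁ : Matrix (Fin n) (Fin n) ℤ) kf kf = -1 := by
          rw [e₁, if_neg hkfm₀, add_zero, hmone]
        have hg₂kf : (g₂ : Matrix (Fin n) (Fin n) ℤ) kf kf = 1 := by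
          rw [e₂, if_pos rfl, hg₁kf, hg₁m₀]; ring
        have hg₂m₀ : (g₂ : Matrix (Fin n) (Fin n) ℤ) m₀ kf = -1 := by
          rw [e₂, if_neg hm₀kf, add_zero, hg₁m₀]
        have hg₃m₀ : (g₃ : Matrix (Fin n) (Fin n) ℤ) m₀ kf = 0 := by
          rw [e₃, if_pos rfl, hg₂m₀, hg₂kf]; ring
        have hg₃kf : (g₃ : Matrix (Fin n) (Fin n) ℤ) kf kf = 1 := by
          rw [e₃, if_neg hkfm₀, add_zero, hg₂kf]
        have hg₃i : ∀ i : Fin n, i ≠ kf → i ≠ m₀ →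
            (g₃ : Matrix (Fin n) (Fin n) ℤ) i kf = (g : Matrix (Fin n) (Fin n) ℤ) i kf := by
          intro i hikf him₀
          rw [e₃, if_neg him₀, add_zero, e₂, if_neg hikf, add_zero, e₁, if_neg him₀, add_zero]
        have hcs₃ : ColStd g₃ k :=
          colStd_mul _ _ (colStd_mul _ _ (colStd_mul _ _ hcs le_rfl) (by simp [hm₀]))
            le_rfl
        apply mem_of_tsl_mul hm₀kf 1
        apply mem_of_tsl_mul hkfm₀ (-2)
        apply mem_of_tsl_mul hm₀kf 1
        rw [← hg₁, ← hg₂, ← hg₃]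
        apply clearcol k hk ihnext (mu g₃ kf) g₃ hcs₃ _ hg₃kf le_rfl
        intro i hikf hki
        by_cases him₀ : i = m₀
        · subst him₀; exact hg₃m₀
        · rw [hg₃i i hikf him₀]; exact hex i hikf hki
      · have hn1 : n = k + 1 := by omega
        have := last_diag_one hk hn1 hcs
        rw [hmone] at this
        omega

lemma colstd_mem : ∀ (m k : ℕ), n ≤ k + m → ∀ g : SL n, ColStd g k →
    g ∈ Subgroup.closure (TS n) := by
  intro m
  induction m with
  | zero =>
    intro k hkn g hg
    have hg1 : g = 1 := by
      apply Subtype.ext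
      ext i j
      rw [hg i j (by omega), Matrix.SpecialLinearGroup.coe_one, Matrix.one_apply]
    rw [hg1]
    exact one_mem _
  | succ m ih =>
    intro k hkn g hg
    by_cases h : n ≤ k + m
    · exact ih k h g hg
    · have hk : k < n := by omega
      exact euclid k hk (fun g' hg' => ih (k + 1) (by omega) g' hg')
        (mu g ⟨k, hk⟩) g hg le_rfl

theorem mem_closure_TS (g : SL n) : g ∈ Subgroup.closure (TS n) :=
  colstd_mem n 0 (by omega) g (fun i j hj => absurd hj (Nat.not_lt_zero _))


/-! ### Cocycle machinery -/

lemma tsl_coe {i j : Fin n} (h : i ≠ j) (c : ℤ) :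
    ((tsl h c : SL n) : Matrix (Fin n) (Fin n) ℤ) = Matrix.transvection i j c := rfl

lemma tv_mulVec (i j : Fin n) (c : ℤ) (v : Fin n → ℤ) (m : Fin n) :
    (Matrix.transvection i j c).mulVec v m = v m + (if m = i then c * v j else 0) := by
  rw [Matrix.transvection, Matrix.add_mulVec, Matrix.one_mulVec, Pi.add_apply]
  congr 1
  rw [Matrix.mulVec, dotProduct]
  have key : ∀ t : Fin n, Matrix.single i j c m t * v t
      = if t = j then (if m = i then c * v j else 0) else 0 := by
    intro t
    simp only [Matrix.single, Matrix.of_apply]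
    by_cases h1 : t = j <;> by_cases h2 : m = i
    · simp [h1, h2]
    · have : i ≠ m := fun h => h2 h.symm
      simp [h1, h2, this]
    · have hjt : j ≠ t := fun h => h1 h.symm
      simp [h1, h2, hjt]
    · have hjt : j ≠ t := fun h => h1 h.symm
      simp [h1, h2, hjt]
  rw [Finset.sum_congr rfl (fun t _ => key t), Finset.sum_ite_eq' Finset.univ j]
  simp

lemma tsl_comm {i j p q : Fin n} (hij : i ≠ j) (hpq : p ≠ q) (hjp : j ≠ p) (hqi : q ≠ i)
    (c e : ℤ) : tsl hij c * tsl hpq e = tsl hpq e * tsl hij c := by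
  apply Subtype.ext
  rw [Matrix.SpecialLinearGroup.coe_mul, Matrix.SpecialLinearGroup.coe_mul,
    tsl_coe, tsl_coe]
  simp only [Matrix.transvection, Matrix.add_mul, Matrix.mul_add, Matrix.one_mul,
    Matrix.mul_one, Matrix.single_mul_single_of_ne c i j p hjp e,
    Matrix.single_mul_single_of_ne e p q i hqi c]
  abel

lemma tsl_star {i j l : Fin n} (hij : i ≠ j) (hil : i ≠ l) (hlj : l ≠ j) (c : ℤ) :
    tsl hil c * tsl hlj (1 : ℤ) = tsl hij c * (tsl hlj 1 * tsl hil c) := by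
  apply Subtype.ext
  simp only [Matrix.SpecialLinearGroup.coe_mul, tsl_coe]
  simp only [Matrix.transvection, Matrix.add_mul, Matrix.mul_add, Matrix.one_mul,
    Matrix.mul_one, Matrix.single_mul_single_same c i l j (1:ℤ),
    Matrix.single_mul_single_of_ne (1:ℤ) l j i (Ne.symm hij) c,
    Matrix.single_mul_single_of_ne c i j l (Ne.symm hlj) (1:ℤ),
    Matrix.single_mul_single_of_ne c i j i (Ne.symm hij) c,
    Matrix.mul_zero, mul_one, add_zero]
  abel

variable {δ : SL n → (Fin n → ℤ)}

lemma delta_one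
    (hδ : ∀ g h : SL n, δ (g * h) = δ g + (g : Matrix (Fin n) (Fin n) ℤ).mulVec (δ h)) :
    δ 1 = 0 := by
  have h := hδ 1 1
  rw [mul_one, Matrix.SpecialLinearGroup.coe_one, Matrix.one_mulVec] at h
  funext m
  have := congrFun h m
  simp only [Pi.add_apply] at this
  simp only [Pi.zero_apply]
  omega

lemma comm_rel
    (hδ : ∀ g h : SL n, δ (g * h) = δ g + (g : Matrix (Fin n) (Fin n) ℤ).mulVec (δ h))
    {g h : SL n} (hc : g * h = h * g) :
    δ g + (g : Matrix (Fin n) (Fin n) ℤ).mulVec (δ h)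
      = δ h + (h : Matrix (Fin n) (Fin n) ℤ).mulVec (δ g) := by
  rw [← hδ g h, hc, hδ h g]

lemma relA
    (hδ : ∀ g h : SL n, δ (g * h) = δ g + (g : Matrix (Fin n) (Fin n) ℤ).mulVec (δ h))
    {i j l : Fin n} (hij : i ≠ j) (hlj : l ≠ j) (hli : l ≠ i) (c : ℤ) :
    δ (tsl hij c) j = 0 := by
  have hcomm : tsl hij c * tsl hlj (1:ℤ) = tsl hlj 1 * tsl hij c :=
    tsl_comm hij hlj (Ne.symm hlj) (Ne.symm hij) c 1
  have h := congrFun (comm_rel hδ hcomm) l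
  simp only [Pi.add_apply, tsl_coe, tv_mulVec, if_neg hli, if_pos rfl, if_true, one_mul] at h
  linarith

lemma relB
    (hδ : ∀ g h : SL n, δ (g * h) = δ g + (g : Matrix (Fin n) (Fin n) ℤ).mulVec (δ h))
    {i j l : Fin n} (hij : i ≠ j) (hil : i ≠ l) (c : ℤ) :
    δ (tsl hij c) l = c * δ (tsl hil 1) j := by
  have hcomm : tsl hij c * tsl hil (1:ℤ) = tsl hil 1 * tsl hij c :=
    tsl_comm hij hil (Ne.symm hij) (Ne.symm hil) c 1
  have h := congrFun (comm_rel hδ hcomm) i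
  simp only [Pi.add_apply, tsl_coe, tv_mulVec, if_pos rfl, if_true, one_mul] at h
  linarith

lemma relC
    (hδ : ∀ g h : SL n, δ (g * h) = δ g + (g : Matrix (Fin n) (Fin n) ℤ).mulVec (δ h))
    {i j l : Fin n} (hij : i ≠ j) (hil : i ≠ l) (hlj : l ≠ j) (c : ℤ) :
    δ (tsl hij c) l = -(δ (tsl hil c) j) ∧
    δ (tsl hij c) i = c * δ (tsl hlj 1) l - c * δ (tsl hlj 1) j - c * δ (tsl hil c) j := by
  have hB : δ (tsl hlj (1:ℤ) * tsl hil c)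
      = δ (tsl hlj 1) + (Matrix.transvection l j 1).mulVec (δ (tsl hil c)) := hδ _ _
  have h2 : δ (tsl hij c * (tsl hlj (1:ℤ) * tsl hil c))
      = δ (tsl hij c) + (Matrix.transvection i j c).mulVec (δ (tsl hlj 1))
        + (Matrix.transvection i j c).mulVec
            ((Matrix.transvection l j 1).mulVec (δ (tsl hil c))) := by
    rw [hδ _ _, hB, Matrix.mulVec_add, tsl_coe, add_assoc]
  have h1 : δ (tsl hil c * tsl hlj (1:ℤ))
      = δ (tsl hil c) + (Matrix.transvection i l c).mulVec (δ (tsl hlj 1)) := hδ _ _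
  have key : δ (tsl hil c) + (Matrix.transvection i l c).mulVec (δ (tsl hlj 1))
      = δ (tsl hij c) + (Matrix.transvection i j c).mulVec (δ (tsl hlj 1))
        + (Matrix.transvection i j c).mulVec
            ((Matrix.transvection l j 1).mulVec (δ (tsl hil c))) := by
    rw [← h1, tsl_star hij hil hlj c, h2]
  have hli : l ≠ i := Ne.symm hil
  have hjl : j ≠ l := Ne.symm hlj
  constructor
  · have h := congrFun key l
    simp only [Pi.add_apply, tv_mulVec, if_neg hli, if_pos rfl, if_true, one_mul] at h
    linarith
  · have h := congrFun key i
    simp only [Pi.add_apply, tv_mulVec, if_pos rfl, if_neg hil, if_neg hij, if_neg hjl, if_true, one_mul] at h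
    linarith

lemma third (h3 : 3 ≤ n) (i j : Fin n) : ∃ l : Fin n, l ≠ i ∧ l ≠ j := by
  by_contra hcon
  push_neg at hcon
  have hsub : (Finset.univ : Finset (Fin n)) ⊆ {i, j} := by
    intro l _
    by_cases h : l = i
    · simp [h]
    · simp [hcon l h]
  have hcard := Finset.card_le_card hsub
  rw [Finset.card_univ, Fintype.card_fin] at hcard
  have : ({i, j} : Finset (Fin n)).card ≤ 2 := by
    apply le_trans (Finset.card_insert_le _ _)
    simp
  omega

lemma dee (h3 : 3 ≤ n)
    (hδ : ∀ g h : SL n, δ (g * h) = δ g + (g : Matrix (Fin n) (Fin n) ℤ).mulVec (δ h)) :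
    ∃ y : Fin n → ℤ, ∀ (i j : Fin n) (hij : i ≠ j) (c : ℤ) (m : Fin n),
      δ (tsl hij c) m = if m = i then -(c * y j) else 0 := by
  -- off-diagonal vanishing
  have D0 : ∀ (i j l : Fin n) (hij : i ≠ j) (hil : i ≠ l) (hlj : l ≠ j) (c : ℤ),
      δ (tsl hij c) l = 0 := by
    intro i j l hij hil hlj c
    have h1 : δ (tsl hij 1) l = δ (tsl hil 1) j := by
      have := relB hδ hij hil (1 : ℤ)
      simpa using this
    have h2 : δ (tsl hij 1) l = -(δ (tsl hil 1) j) := (relC hδ hij hil hlj 1).1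
    have hz : δ (tsl hil 1) j = 0 := by linarith
    rw [relB hδ hij hil c, hz, mul_zero]
  -- diagonal value
  have Dg : ∀ (i j l : Fin n) (hij : i ≠ j) (hil : i ≠ l) (hlj : l ≠ j) (c : ℤ),
      δ (tsl hij c) i = c * δ (tsl hlj 1) l := by
    intro i j l hij hil hlj c
    have h := (relC hδ hij hil hlj c).2
    have hb : δ (tsl hlj 1) j = 0 := relA hδ hlj hij hil 1
    have ha : δ (tsl hil c) j = 0 := D0 i l j hil hij (Ne.symm hlj) c
    rw [h, hb, ha]; ring
  -- independence of the first index
  have Ind : ∀ (i i' j : Fin n) (hij : i ≠ j) (hi'j : i' ≠ j),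
      δ (tsl hij 1) i = δ (tsl hi'j 1) i' := by
    intro i i' j hij hi'j
    by_cases hii' : i = i'
    · subst hii'; rfl
    · have := Dg i j i' hij hii' hi'j 1
      simpa using this
  have pick : ∀ j : Fin n, ∃ i : Fin n, i ≠ j := by
    intro j
    obtain ⟨l, hl⟩ := third h3 j j
    exact ⟨l, hl.1⟩
  choose p hp using pick
  refine ⟨fun j => -(δ (tsl (hp j) 1) (p j)), ?_⟩
  intro i j hij c m
  by_cases hmi : m = i
  · rw [if_pos hmi, hmi]
    obtain ⟨l, hli, hlj⟩ := third h3 i j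
    rw [Dg i j l hij (Ne.symm hli) hlj c]
    rw [Ind l (p j) j hlj (hp j)]
    ring
  · rw [if_neg hmi]
    by_cases hmj : m = j
    · subst hmj
      obtain ⟨l, hli, hlj⟩ := third h3 i m
      exact relA hδ hij hlj hli c
    · obtain ⟨l, hli, hlj⟩ := third h3 i j
      exact D0 i j m hij (fun h => hmi h.symm) hmj c

theorem coboundary_of_ge3 (h3 : 3 ≤ n)
    (hδ : ∀ g h : SL n, δ (g * h) = δ g + (g : Matrix (Fin n) (Fin n) ℤ).mulVec (δ h)) :
    ∃ y : Fin n → ℤ, ∀ g : SL n,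
      δ g = y - (g : Matrix (Fin n) (Fin n) ℤ).mulVec y := by
  obtain ⟨y, hy⟩ := dee h3 hδ
  refine ⟨y, ?_⟩
  let H : Subgroup (SL n) :=
    { carrier := {g | δ g = y - (g : Matrix (Fin n) (Fin n) ℤ).mulVec y}
      one_mem' := by
        show δ 1 = y - _
        rw [delta_one hδ, Matrix.SpecialLinearGroup.coe_one, Matrix.one_mulVec, sub_self]
      mul_mem' := by
        intro a b ha hb
        show δ (a * b) = _
        rw [hδ a b, ha, hb, Matrix.mulVec_sub, Matrix.SpecialLinearGroup.coe_mul,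
          ← Matrix.mulVec_mulVec]
        abel
      inv_mem' := by
        intro a ha
        show δ a⁻¹ = _
        have h := hδ a⁻¹ a
        rw [inv_mul_cancel, delta_one hδ, ha, Matrix.mulVec_sub,
          Matrix.mulVec_mulVec] at h
        have hone : ((a⁻¹ : SL n) : Matrix (Fin n) (Fin n) ℤ)
            * (a : Matrix (Fin n) (Fin n) ℤ) = 1 := by
          rw [← Matrix.SpecialLinearGroup.coe_mul, inv_mul_cancel,
            Matrix.SpecialLinearGroup.coe_one]
        rw [hone, Matrix.one_mulVec] at h
        have := congrArg (fun v => v - (δ a⁻¹ + (((a⁻¹ : SL n) : Matrix (Fin n) (Fin n) ℤ)).mulVec y - y)) h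
        funext m
        have hm := congrFun h m
        simp only [Pi.zero_apply, Pi.add_apply, Pi.sub_apply] at hm
        simp only [Pi.sub_apply]
        omega }
  intro g
  have hTS : TS n ⊆ H := by
    rintro x ⟨i, j, hij, c, rfl⟩
    show δ (tsl hij c) = y - _
    funext m
    rw [hy i j hij c m]
    simp only [Pi.sub_apply, tsl_coe, tv_mulVec]
    by_cases hmi : m = i
    · rw [if_pos hmi, if_pos hmi]; ring
    · rw [if_neg hmi, if_neg hmi]; ring
  exact (Subgroup.closure_le H).mpr hTS (mem_closure_TS g)

theorem coboundary_of_two (δ : SL 2 → (Fin 2 → ℤ))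
    (hδ : ∀ g h : SL 2, δ (g * h) = δ g + (g : Matrix (Fin 2) (Fin 2) ℤ).mulVec (δ h)) :
    ∃ y : Fin 2 → ℤ, ∀ g : SL 2,
      δ g = y - (g : Matrix (Fin 2) (Fin 2) ℤ).mulVec y := by
  have hdet : (-1 : Matrix (Fin 2) (Fin 2) ℤ).det = 1 := by
    rw [show (-1 : Matrix (Fin 2) (Fin 2) ℤ) = -(1 : Matrix (Fin 2) (Fin 2) ℤ) from rfl,
      Matrix.det_neg]
    simp
  set ω : SL 2 := ⟨-1, hdet⟩ with hω
  have hcent : ∀ g : SL 2, g * ω = ω * g := by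
    intro g
    apply Subtype.ext
    rw [Matrix.SpecialLinearGroup.coe_mul, Matrix.SpecialLinearGroup.coe_mul]
    show (g : Matrix (Fin 2) (Fin 2) ℤ) * (-1) = (-1) * g
    rw [mul_neg_one, neg_one_mul]
  have key : ∀ (g : SL 2) (m : Fin 2),
      2 * δ g m = δ ω m - (g : Matrix (Fin 2) (Fin 2) ℤ).mulVec (δ ω) m := by
    intro g m
    have h := congrFun (comm_rel hδ (hcent g)) m
    have hωv : ((ω : SL 2) : Matrix (Fin 2) (Fin 2) ℤ).mulVec (δ g)
        = -(δ g) := by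
      show (-1 : Matrix (Fin 2) (Fin 2) ℤ).mulVec (δ g) = -(δ g)
      rw [show (-1 : Matrix (Fin 2) (Fin 2) ℤ) = -(1 : Matrix (Fin 2) (Fin 2) ℤ) from rfl,
        Matrix.neg_mulVec, Matrix.one_mulVec]
    rw [hωv] at h
    simp only [Pi.add_apply, Pi.neg_apply, Pi.sub_apply] at h ⊢
    omega
  have hne : ∀ j : Fin 2, j + 1 ≠ j := by decide
  set y : Fin 2 → ℤ := fun j => -(δ (tsl (hne j) 1) (j + 1)) with hy
  have hω2 : ∀ j : Fin 2, δ ω j = 2 * y j := by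
    intro j
    have h := key (tsl (hne j) 1) (j + 1)
    rw [tsl_coe, tv_mulVec, if_pos rfl] at h
    simp only [hy, one_mul]
    omega
  refine ⟨y, ?_⟩
  intro g
  funext m
  have h := key g m
  have hgy : (g : Matrix (Fin 2) (Fin 2) ℤ).mulVec (δ ω) m
      = 2 * (g : Matrix (Fin 2) (Fin 2) ℤ).mulVec y m := by
    have : δ ω = (2 : ℤ) • y := by
      funext j; rw [hω2 j]; simp
    rw [this, Matrix.mulVec_smul]
    simp
  rw [hgy, hω2] at h
  simp only [Pi.sub_apply]
  omega

end SlnCob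

/-- For `n ≥ 2`, every 1-cocycle `δ : SL(n,ℤ) → ℤⁿ` is a coboundary:
`H¹(SL(n,ℤ), ℤⁿ) = 0`. -/
theorem sln_cocycle_is_coboundary {n : ℕ} (hn : 2 ≤ n)
    (δ : Matrix.SpecialLinearGroup (Fin n) ℤ → (Fin n → ℤ))
    (hδ : ∀ g h : Matrix.SpecialLinearGroup (Fin n) ℤ,
      δ (g * h) = δ g + (g : Matrix (Fin n) (Fin n) ℤ).mulVec (δ h)) :
    ∃ y : Fin n → ℤ, ∀ g : Matrix.SpecialLinearGroup (Fin n) ℤ,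
      δ g = y - (g : Matrix (Fin n) (Fin n) ℤ).mulVec y := by
  rcases Nat.lt_or_ge n 3 with h | h3
  · have h2 : n = 2 := by omega
    subst h2
    exact SlnCob.coboundary_of_two δ hδ
  · exact SlnCob.coboundary_of_ge3 h3 hδ
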